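/- Let f, g : X → ℝ ∪ {+∞} be proper convex functions and assume that one of them is finite and continuous at some point of the effective domain of the other. Then inf_{z ∈ X**} ( f**(z) + g**(z) ) = inf_{x ∈ X} ( f(x) + g(x) ); consequently, there is a zero duality gap between (P): inf_{x∈X}(f+g)(x) and its Fenchel dual (D): sup_{x* ∈ X*} ( −f*(x*) − g*(−x*) ), i.e. v(D) = v(P). -/

import Mathlib

open Filter Topology Set NormedSpace
open scoped Classical

noncomputable section

/-- Effective domain of an extended-real-valued function. -/
def edom {Z : Type*} (g : Z → EReal) : Set Z := {z | g z ≠ ⊤}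

/-- Indicator function of a set, with values in `EReal`. -/
def eindicator {Z : Type*} (A : Set Z) : Z → EReal := fun z => if z ∈ A then 0 else ⊤

/-- Scalar multiplication of an `EReal` value by a nonnegative real, with the
convention `0 · (+∞) = +∞`. -/
def smulInf (a : ℝ) (v : EReal) : EReal := if v = ⊤ then ⊤ else (a : EReal) * v

variable {X : Type*} [NormedAddCommGroup X] [NormedSpace ℝ X]

/-- Convexity for `EReal`-valued functions. -/
def ConvexER (g : X → EReal) : Prop :=
  ∀ x y : X, ∀ a b : ℝ, 0 ≤ a → 0 ≤ b → a + b = 1 →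
    g (a • x + b • y) ≤ (a : EReal) * g x + (b : EReal) * g y

/-- Properness: not identically `+∞`, and nowhere `-∞` (so the function maps into `ℝ ∪ {+∞}`). -/
def ProperER (g : X → EReal) : Prop := (∃ x, g x ≠ ⊤) ∧ ∀ x, g x ≠ ⊥

/-- Fenchel conjugate of `g : X → EReal`, defined on the topological dual. -/
def fconj (g : X → EReal) : StrongDual ℝ X → EReal :=
  fun p => ⨆ x : X, (p x : EReal) - g x

/-- Fenchel biconjugate of `g : X → EReal`, defined on the bidual. -/
def fbiconj (g : X → EReal) : StrongDual ℝ (StrongDual ℝ X) → EReal :=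
  fun z => ⨆ p : StrongDual ℝ X, (z p : EReal) - fconj g p

/-- Closure with respect to the weak-* topology `σ(E*, E)` on a dual space. -/
def wstarClosure {E : Type*} [NormedAddCommGroup E] [NormedSpace ℝ E]
    (A : Set (StrongDual ℝ E)) : Set (StrongDual ℝ E) :=
  StrongDual.toWeakDual ⁻¹' closure (StrongDual.toWeakDual '' A)

/-! ### Auxiliary lemmas -/

lemma le_fconj (f : X → EReal) (p : StrongDual ℝ X) (x : X) : (p x : EReal) - f x ≤ fconj f p :=
  le_iSup (fun x => (p x : EReal) - f x) x

lemma fconj_ne_bot (f : X → EReal) (hfp : ProperER f) (p : StrongDual ℝ X) : fconj f p ≠ ⊥ := by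
  obtain ⟨⟨x0, hx0⟩, hb⟩ := hfp
  have h := le_fconj f p x0
  have hco : f x0 = ((f x0).toReal : EReal) := (EReal.coe_toReal hx0 (hb x0)).symm
  rw [hco, ← EReal.coe_sub] at h
  intro hB
  rw [hB, le_bot_iff] at h
  exact EReal.coe_ne_bot _ h

lemma weak_duality (f g : X → EReal) (hfb : ∀ x, f x ≠ ⊥) (hgb : ∀ x, g x ≠ ⊥)
    (p : StrongDual ℝ X) (x : X) : -fconj f p - fconj g (-p) ≤ f x + g x := by
  by_cases hf : f x = ⊤
  · rw [hf, EReal.top_add_of_ne_bot (hgb x)]; exact le_top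
  by_cases hg : g x = ⊤
  · rw [hg, EReal.add_top_of_ne_bot (hfb x)]; exact le_top
  have hfr : f x = ((f x).toReal : EReal) := (EReal.coe_toReal hf (hfb x)).symm
  have hgr : g x = ((g x).toReal : EReal) := (EReal.coe_toReal hg (hgb x)).symm
  set r := (f x).toReal
  set s := (g x).toReal
  have h1 : ((p x - r : ℝ) : EReal) ≤ fconj f p := by
    have := le_fconj f p x; rwa [hfr, ← EReal.coe_sub] at this
  have h2 : ((-(p x) - s : ℝ) : EReal) ≤ fconj g (-p) := by
    have := le_fconj g (-p) x
    rwa [hgr, ContinuousLinearMap.neg_apply, ← EReal.coe_sub] at this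
  have h1' : -fconj f p ≤ ((r - p x : ℝ) : EReal) := by
    rw [show ((r - p x : ℝ) : EReal) = -((p x - r : ℝ) : EReal) by
      rw [← EReal.coe_neg]; norm_num]
    exact EReal.neg_le_neg_iff.mpr h1
  have h2' : -fconj g (-p) ≤ ((s + p x : ℝ) : EReal) := by
    rw [show ((s + p x : ℝ) : EReal) = -((-(p x) - s : ℝ) : EReal) by
      rw [← EReal.coe_neg]; norm_num]
    exact EReal.neg_le_neg_iff.mpr h2
  calc -fconj f p - fconj g (-p) = -fconj f p + -fconj g (-p) := sub_eq_add_neg _ _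
    _ ≤ ((r - p x : ℝ) : EReal) + ((s + p x : ℝ) : EReal) := add_le_add h1' h2'
    _ = ((r + s : ℝ) : EReal) := by rw [← EReal.coe_add]; congr 1; ring
    _ = f x + g x := by rw [hfr, hgr, EReal.coe_add]

lemma fbiconj_incl_le (f : X → EReal) (hfb : ∀ x, f x ≠ ⊥) (x : X) :
    fbiconj f (inclusionInDoubleDual ℝ X x) ≤ f x := by
  refine iSup_le fun p => ?_
  have happ : (inclusionInDoubleDual ℝ X x) p = p x := rfl
  rw [happ]
  by_cases hx : f x = ⊤
  · rw [hx]; exact le_top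
  have hxr : f x = ((f x).toReal : EReal) := (EReal.coe_toReal hx (hfb x)).symm
  set rx := (f x).toReal
  have h1 : ((p x - rx : ℝ) : EReal) ≤ fconj f p := by
    have := le_fconj f p x; rwa [hxr, ← EReal.coe_sub] at this
  have h2 : -fconj f p ≤ ((rx - p x : ℝ) : EReal) := by
    rw [show ((rx - p x : ℝ) : EReal) = -((p x - rx : ℝ) : EReal) by
      rw [← EReal.coe_neg]; norm_num]
    exact EReal.neg_le_neg_iff.mpr h1
  calc (p x : EReal) - fconj f p = (p x : EReal) + -fconj f p := sub_eq_add_neg _ _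
    _ ≤ (p x : EReal) + ((rx - p x : ℝ) : EReal) := add_le_add le_rfl h2
    _ = ((rx : ℝ) : EReal) := by rw [← EReal.coe_add]; congr 1; ring
    _ = f x := hxr.symm

lemma dual_le_biconj (f g : X → EReal) (hfp : ProperER f) (hgp : ProperER g)
    (z : StrongDual ℝ (StrongDual ℝ X)) (p : StrongDual ℝ X) :
    -fconj f p - fconj g (-p) ≤ fbiconj f z + fbiconj g z := by
  by_cases h1 : fconj f p = ⊤
  · rw [h1, sub_eq_add_neg, EReal.neg_top, EReal.bot_add]; exact bot_le
  by_cases h2 : fconj g (-p) = ⊤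
  · rw [h2, sub_eq_add_neg, EReal.neg_top, EReal.add_bot]; exact bot_le
  have e1 : fconj f p = ((fconj f p).toReal : EReal) :=
    (EReal.coe_toReal h1 (fconj_ne_bot f hfp p)).symm
  have e2 : fconj g (-p) = ((fconj g (-p)).toReal : EReal) :=
    (EReal.coe_toReal h2 (fconj_ne_bot g hgp (-p))).symm
  set a1 := (fconj f p).toReal
  set a2 := (fconj g (-p)).toReal
  have hb1 : ((z p - a1 : ℝ) : EReal) ≤ fbiconj f z := by
    have : (z p : EReal) - fconj f p ≤ fbiconj f z :=
      le_iSup (fun p => (z p : EReal) - fconj f p) p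
    rwa [e1, ← EReal.coe_sub] at this
  have hb2 : ((-(z p) - a2 : ℝ) : EReal) ≤ fbiconj g z := by
    have : (z (-p) : EReal) - fconj g (-p) ≤ fbiconj g z :=
      le_iSup (fun p' => (z p' : EReal) - fconj g p') (-p)
    rwa [e2, map_neg, ← EReal.coe_sub] at this
  calc -fconj f p - fconj g (-p) = ((-a1 - a2 : ℝ) : EReal) := by
        rw [e1, e2, ← EReal.coe_neg, ← EReal.coe_sub]
    _ = ((z p - a1 : ℝ) : EReal) + ((-(z p) - a2 : ℝ) : EReal) := by
        rw [← EReal.coe_add]; congr 1; ring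
    _ ≤ fbiconj f z + fbiconj g z := add_le_add hb1 hb2

lemma sup_swap_le (f g : X → EReal) :
    (⨆ p : StrongDual ℝ X, -fconj f p - fconj g (-p)) ≤
      ⨆ p : StrongDual ℝ X, -fconj g p - fconj f (-p) := by
  refine iSup_le fun p => le_iSup_of_le (-p) ?_
  rw [neg_neg, sub_eq_add_neg, sub_eq_add_neg, add_comm]

lemma strong_aux (f g : X → EReal) (hfp : ProperER f) (hfc : ConvexER f)
    (hgp : ProperER g) (hgc : ConvexER g)
    (hcont : ∃ x, g x ≠ ⊤ ∧ f x ≠ ⊤ ∧ ContinuousAt f x) :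
    (⨆ p : StrongDual ℝ X, -fconj f p - fconj g (-p)) = ⨅ x : X, f x + g x := by
  obtain ⟨x0, hgx0, hfx0, hfcont⟩ := hcont
  have hfb := hfp.2
  have hgb := hgp.2
  refine le_antisymm (iSup_le fun p => le_iInf fun x => weak_duality f g hfb hgb p x) ?_
  set m := ⨅ x : X, f x + g x with hm
  by_cases hmbot : m = ⊥
  · rw [hmbot]; exact bot_le
  have hfr0 : f x0 = ((f x0).toReal : EReal) := (EReal.coe_toReal hfx0 (hfb x0)).symm
  have hgr0 : g x0 = ((g x0).toReal : EReal) := (EReal.coe_toReal hgx0 (hgb x0)).symm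
  set r0 := (f x0).toReal
  set s0 := (g x0).toReal
  have hmle : ∀ x : X, m ≤ f x + g x := fun x => iInf_le _ x
  have hmtop : m ≠ ⊤ := by
    intro h
    have h2 := hmle x0
    rw [h, top_le_iff, hfr0, hgr0, ← EReal.coe_add] at h2
    exact EReal.coe_ne_top _ h2
  have hmR : m = ((m.toReal : ℝ) : EReal) := (EReal.coe_toReal hmtop hmbot).symm
  set mR := m.toReal
  -- a neighborhood where f is small
  have hnb : {x : X | f x < ((r0 + 1 : ℝ) : EReal)} ∈ 𝓝 x0 := by
    have hlt : f x0 < ((r0 + 1 : ℝ) : EReal) := by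
      rw [hfr0]; exact_mod_cast (by linarith : r0 < r0 + 1)
    exact hfcont (Iio_mem_nhds hlt)
  obtain ⟨U, hUsub, hUopen, hx0U⟩ := mem_nhds_iff.mp hnb
  -- the two convex sets in X × ℝ
  set A : Set (X × ℝ) := {q | f q.1 < (q.2 : EReal)} with hA
  set B : Set (X × ℝ) := {q | g q.1 ≤ ((mR - q.2 : ℝ) : EReal)} with hB
  have hAconv : Convex ℝ A := by
    rintro ⟨x, t⟩ hx ⟨y, s⟩ hy a b ha hb hab
    simp only [hA, Set.mem_setOf_eq] at hx hy
    have hxr : f x = ((f x).toReal : EReal) := (EReal.coe_toReal (ne_top_of_lt hx) (hfb x)).symm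
    have hyr : f y = ((f y).toReal : EReal) := (EReal.coe_toReal (ne_top_of_lt hy) (hfb y)).symm
    set rx := (f x).toReal
    set ry := (f y).toReal
    have h1 : f (a • x + b • y) ≤ ((a * rx + b * ry : ℝ) : EReal) := by
      have := hfc x y a b ha hb hab
      rwa [hxr, hyr, ← EReal.coe_mul, ← EReal.coe_mul, ← EReal.coe_add] at this
    have hxlt : rx < t := by rw [hxr] at hx; exact_mod_cast hx
    have hylt : ry < s := by rw [hyr] at hy; exact_mod_cast hy
    have h2 : a * rx + b * ry < a * t + b * s := by
      rcases lt_or_ge 0 a with hap | hap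
      · exact add_lt_add_of_lt_of_le (mul_lt_mul_of_pos_left hxlt hap)
          (mul_le_mul_of_nonneg_left hylt.le hb)
      · have ha0 : a = 0 := le_antisymm hap ha
        have hb1 : b = 1 := by linarith
        rw [ha0, hb1]; simpa using hylt
    show f ((a • (x, t) + b • (y, s)).1) < (((a • (x, t) + b • (y, s)).2 : ℝ) : EReal)
    simp only [Prod.smul_mk, Prod.mk_add_mk, smul_eq_mul]
    exact lt_of_le_of_lt h1 (by exact_mod_cast h2)
  have hBconv : Convex ℝ B := by
    rintro ⟨x, t⟩ hx ⟨y, s⟩ hy a b ha hb hab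
    simp only [hB, Set.mem_setOf_eq] at hx hy
    have hxt : g x ≠ ⊤ := ne_top_of_le_ne_top (EReal.coe_ne_top _) hx
    have hyt : g y ≠ ⊤ := ne_top_of_le_ne_top (EReal.coe_ne_top _) hy
    have hxr : g x = ((g x).toReal : EReal) := (EReal.coe_toReal hxt (hgb x)).symm
    have hyr : g y = ((g y).toReal : EReal) := (EReal.coe_toReal hyt (hgb y)).symm
    set rx := (g x).toReal
    set ry := (g y).toReal
    have h1 : g (a • x + b • y) ≤ ((a * rx + b * ry : ℝ) : EReal) := by
      have := hgc x y a b ha hb hab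
      rwa [hxr, hyr, ← EReal.coe_mul, ← EReal.coe_mul, ← EReal.coe_add] at this
    have hxle : rx ≤ mR - t := by rw [hxr] at hx; exact_mod_cast hx
    have hyle : ry ≤ mR - s := by rw [hyr] at hy; exact_mod_cast hy
    have h2 : a * rx + b * ry ≤ mR - (a * t + b * s) := by
      have hmm : a * mR + b * mR = mR := by rw [← add_mul, hab, one_mul]
      have e1 := mul_le_mul_of_nonneg_left hxle ha
      have e2 := mul_le_mul_of_nonneg_left hyle hb
      have e3 : a * (mR - t) = a * mR - a * t := by ring
      have e4 : b * (mR - s) = b * mR - b * s := by ring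
      linarith
    show g ((a • (x, t) + b • (y, s)).1) ≤ ((mR - (a • (x, t) + b • (y, s)).2 : ℝ) : EReal)
    simp only [Prod.smul_mk, Prod.mk_add_mk, smul_eq_mul]
    exact le_trans h1 (by exact_mod_cast h2)
  have hdisj : Disjoint A B := by
    rw [Set.disjoint_left]
    rintro ⟨x, t⟩ hxA hxB
    simp only [hA, hB, Set.mem_setOf_eq] at hxA hxB
    have hxr : f x = ((f x).toReal : EReal) := (EReal.coe_toReal (ne_top_of_lt hxA) (hfb x)).symm
    have hgt : g x ≠ ⊤ := ne_top_of_le_ne_top (EReal.coe_ne_top _) hxB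
    have hgr : g x = ((g x).toReal : EReal) := (EReal.coe_toReal hgt (hgb x)).symm
    have h1 : (f x).toReal < t := by rw [hxr] at hxA; exact_mod_cast hxA
    have h2 : (g x).toReal ≤ mR - t := by rw [hgr] at hxB; exact_mod_cast hxB
    have h3 := hmle x
    rw [hmR, hxr, hgr, ← EReal.coe_add, EReal.coe_le_coe_iff] at h3
    linarith
  have hopensub : U ×ˢ Set.Ioi (r0 + 1 : ℝ) ⊆ A := by
    rintro ⟨x, t⟩ ⟨hxU, ht⟩
    have h1 : f x < ((r0 + 1 : ℝ) : EReal) := hUsub hxU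
    exact h1.trans_le (by exact_mod_cast (Set.mem_Ioi.mp ht).le)
  have hint : U ×ˢ Set.Ioi (r0 + 1 : ℝ) ⊆ interior A :=
    interior_maximal hopensub (hUopen.prod isOpen_Ioi)
  have hintpt : ∀ t : ℝ, r0 + 1 < t → ((x0, t) : X × ℝ) ∈ interior A :=
    fun t ht => hint ⟨hx0U, ht⟩
  obtain ⟨φ, u, hsep1, hsep2⟩ :=
    geometric_hahn_banach_open hAconv.interior isOpen_interior hBconv
      (hdisj.mono_left interior_subset)
  -- the separating inequality extends (non-strictly) to all of A
  have hA_le : ∀ q ∈ A, φ q ≤ u := by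
    intro q hq
    have hw : ((x0, r0 + 2) : X × ℝ) ∈ interior A := hintpt _ (by linarith)
    have key : ∀ n : ℕ, φ ((1/(n+1 : ℝ)) • ((x0, r0+2) : X × ℝ) + (1 - 1/(n+1:ℝ)) • q) < u := by
      intro n
      refine hsep1 _ (hAconv.combo_interior_closure_mem_interior hw (subset_closure hq)
        (by positivity) ?_ (by ring))
      have h1 : 1/(n+1:ℝ) ≤ 1 := by
        rw [div_le_one (by positivity)]; linarith [Nat.cast_nonneg (α := ℝ) n]
      linarith
    have heq : ∀ n : ℕ, φ ((1/(n+1 : ℝ)) • ((x0, r0+2) : X × ℝ) + (1 - 1/(n+1:ℝ)) • q)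
        = (1/(n+1:ℝ)) * φ (x0, r0+2) + (1 - 1/(n+1:ℝ)) * φ q := by
      intro n; rw [map_add, map_smul, map_smul]; rfl
    have h0 : Filter.Tendsto (fun n : ℕ => 1/((n:ℝ)+1)) Filter.atTop (𝓝 0) :=
      tendsto_one_div_add_atTop_nhds_zero_nat
    have htend : Filter.Tendsto
        (fun n : ℕ => (1/(n+1:ℝ)) * φ (x0, r0+2) + (1 - 1/(n+1:ℝ)) * φ q)
        Filter.atTop (𝓝 (φ q)) := by
      have hc : Filter.Tendsto (fun n : ℕ => 1 - 1/((n:ℝ)+1)) Filter.atTop (𝓝 (1 - 0)) :=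
        Filter.Tendsto.sub tendsto_const_nhds h0
      have := (h0.mul_const (φ (x0, r0+2))).add (hc.mul_const (φ q))
      simpa using this
    refine le_of_tendsto htend (Filter.Eventually.of_forall fun n => ?_)
    rw [← heq n]; exact (key n).le
  set p : StrongDual ℝ X := φ.comp (ContinuousLinearMap.inl ℝ X ℝ) with hp
  set β : ℝ := φ (0, 1) with hβ
  have hφeq : ∀ (x : X) (t : ℝ), φ (x, t) = p x + β * t := by
    intro x t
    have hsplit : ((x, t) : X × ℝ) = (x, (0:ℝ)) + t • ((0:X), (1:ℝ)) := by
      simp [Prod.ext_iff]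
    rw [hsplit, map_add, map_smul]
    have h1 : φ (x, (0:ℝ)) = p x := by
      simp [hp, ContinuousLinearMap.comp_apply, ContinuousLinearMap.inl_apply]
    rw [smul_eq_mul, h1]
    ring
  have hlt : ∀ t : ℝ, r0 + 1 < t → p x0 + β * t < u := by
    intro t ht
    rw [← hφeq]; exact hsep1 _ (hintpt t ht)
  have hβneg : β < 0 := by
    have hβle : β ≤ 0 := by
      by_contra h
      push_neg at h
      set t := max (r0 + 2) ((u - p x0 + 1)/β) with htdef
      have h1 : r0 + 1 < t := lt_of_lt_of_le (by linarith) (le_max_left _ _)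
      have h2 : (u - p x0 + 1)/β ≤ t := le_max_right _ _
      have h3 : u - p x0 + 1 ≤ β * t := by
        rw [div_le_iff₀ h] at h2; linarith
      have := hlt t h1
      linarith
    rcases hβle.lt_or_eq with h | h
    · exact h
    · exfalso
      have hBpt : ((x0, mR - s0) : X × ℝ) ∈ B := by
        simp only [hB, Set.mem_setOf_eq]
        rw [hgr0]
        norm_num
      have h1 := hsep2 _ hBpt
      rw [hφeq] at h1
      have h2 := hlt (r0 + 2) (by linarith)
      rw [h] at h1 h2
      simp only [zero_mul, add_zero] at h1 h2
      linarith
  set b : ℝ := -β with hbdef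
  have hbpos : 0 < b := by rw [hbdef]; linarith
  have hβb : β = -b := by rw [hbdef]; ring
  -- pointwise bounds
  have hfkey : ∀ x : X, f x ≠ ⊤ → p x - b * (f x).toReal ≤ u := by
    intro x hx
    have hxr : f x = ((f x).toReal : EReal) := (EReal.coe_toReal hx (hfb x)).symm
    set rx := (f x).toReal
    have hle : ∀ ε : ℝ, 0 < ε → p x + β * (rx + ε) ≤ u := by
      intro ε hε
      have hAin : ((x, rx + ε) : X × ℝ) ∈ A := by
        simp only [hA, Set.mem_setOf_eq]
        rw [hxr]; exact_mod_cast (by linarith : rx < rx + ε)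
      have := hA_le _ hAin
      rwa [hφeq] at this
    refine le_of_forall_pos_le_add ?_
    intro δ hδ
    have h1 := hle (δ / b) (by positivity)
    have h3 : β * (rx + δ / b) = β * rx - δ := by
      rw [hβb]; field_simp; ring
    rw [h3] at h1
    rw [hβb] at h1
    linarith
  have hgkey : ∀ x : X, g x ≠ ⊤ → u ≤ p x - b * mR + b * (g x).toReal := by
    intro x hx
    have hxr : g x = ((g x).toReal : EReal) := (EReal.coe_toReal hx (hgb x)).symm
    set sx := (g x).toReal
    have hBin : ((x, mR - sx) : X × ℝ) ∈ B := by
      simp only [hB, Set.mem_setOf_eq]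
      rw [hxr]; norm_num
    have := hsep2 _ hBin
    rw [hφeq, hβb] at this
    linarith
  set q : StrongDual ℝ X := b⁻¹ • p with hq
  have hqx : ∀ x : X, q x = b⁻¹ * p x := fun x => rfl
  have hfstar : fconj f q ≤ ((u / b : ℝ) : EReal) := by
    refine iSup_le fun x => ?_
    by_cases hx : f x = ⊤
    · rw [hx, sub_eq_add_neg, EReal.neg_top, EReal.add_bot]; exact bot_le
    have hxr : f x = ((f x).toReal : EReal) := (EReal.coe_toReal hx (hfb x)).symm
    set rx := (f x).toReal
    have h1 := hfkey x hx
    have h2 : q x - rx ≤ u / b := by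
      rw [hqx]
      have h3 := mul_le_mul_of_nonneg_left h1 (inv_pos.mpr hbpos).le
      have h4 : b⁻¹ * (p x - b * rx) = b⁻¹ * p x - rx := by
        field_simp
      rw [h4] at h3
      rw [div_eq_inv_mul]
      linarith
    rw [hxr, ← EReal.coe_sub]
    exact_mod_cast h2
  have hgstar : fconj g (-q) ≤ ((-(u / b) - mR : ℝ) : EReal) := by
    refine iSup_le fun x => ?_
    by_cases hx : g x = ⊤
    · rw [hx, sub_eq_add_neg, EReal.neg_top, EReal.add_bot]; exact bot_le
    have hxr : g x = ((g x).toReal : EReal) := (EReal.coe_toReal hx (hgb x)).symm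
    set sx := (g x).toReal
    have h1 := hgkey x hx
    have h2 : (-q) x - sx ≤ -(u / b) - mR := by
      have h5 : (-q) x = -(b⁻¹ * p x) := by rw [ContinuousLinearMap.neg_apply, hqx]
      rw [h5]
      have h3 := mul_le_mul_of_nonneg_left h1 (inv_pos.mpr hbpos).le
      have h4 : b⁻¹ * (p x - b * mR + b * sx) = b⁻¹ * p x - mR + sx := by
        field_simp
      rw [h4] at h3
      rw [div_eq_inv_mul]
      linarith
    rw [hxr, ← EReal.coe_sub]
    exact_mod_cast h2
  -- conclude
  rw [hmR]
  refine le_iSup_of_le q ?_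
  have hne1 : fconj f q ≠ ⊥ := fconj_ne_bot f hfp q
  have hne2 : fconj g (-q) ≠ ⊥ := fconj_ne_bot g hgp (-q)
  have ht1 : fconj f q ≠ ⊤ := ne_top_of_le_ne_top (EReal.coe_ne_top _) hfstar
  have ht2 : fconj g (-q) ≠ ⊤ := ne_top_of_le_ne_top (EReal.coe_ne_top _) hgstar
  have e1 : fconj f q = ((fconj f q).toReal : EReal) := (EReal.coe_toReal ht1 hne1).symm
  have e2 : fconj g (-q) = ((fconj g (-q)).toReal : EReal) := (EReal.coe_toReal ht2 hne2).symm
  set a1 := (fconj f q).toReal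
  set a2 := (fconj g (-q)).toReal
  have hle1 : a1 ≤ u / b := by rw [e1] at hfstar; exact_mod_cast hfstar
  have hle2 : a2 ≤ -(u / b) - mR := by rw [e2] at hgstar; exact_mod_cast hgstar
  rw [e1, e2, ← EReal.coe_neg, ← EReal.coe_sub]
  exact_mod_cast (by linarith : mR ≤ -a1 - a2)

/-- (Fenchel duality via biconjugates.) Let `f, g` be proper convex
and suppose one of them is finite and continuous at some point of the effective domain of
the other. Then `inf_{z ∈ X**} (f**(z) + g**(z)) = inf_{x ∈ X} (f(x) + g(x))`, and
consequently there is a zero duality gap with the Fenchel dual: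
`sup_{x*} ( −f*(x*) − g*(−x*) ) = inf_x (f(x) + g(x))`. -/
theorem fenchel_duality_biconjugate
    {X : Type*} [NormedAddCommGroup X] [NormedSpace ℝ X] [CompleteSpace X]
    (f g : X → EReal)
    (hfp : ProperER f) (hfc : ConvexER f) (hgp : ProperER g) (hgc : ConvexER g)
    (hcont : (∃ x, g x ≠ ⊤ ∧ f x ≠ ⊤ ∧ ContinuousAt f x) ∨
             (∃ x, f x ≠ ⊤ ∧ g x ≠ ⊤ ∧ ContinuousAt g x)) :
    (⨅ z : StrongDual ℝ (StrongDual ℝ X), fbiconj f z + fbiconj g z) = (⨅ x : X, f x + g x) ∧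
      (⨆ p : StrongDual ℝ X, -fconj f p - fconj g (-p)) = ⨅ x : X, f x + g x := by
  have hfb := hfp.2
  have hgb := hgp.2
  have hsup : (⨆ p : StrongDual ℝ X, -fconj f p - fconj g (-p)) = ⨅ x : X, f x + g x := by
    rcases hcont with h | h
    · exact strong_aux f g hfp hfc hgp hgc h
    · have h2 := strong_aux g f hgp hgc hfp hfc h
      rw [le_antisymm (sup_swap_le f g) (sup_swap_le g f), h2]
      exact iInf_congr fun x => add_comm _ _
  refine ⟨le_antisymm ?_ ?_, hsup⟩
  · refine le_iInf fun x => ?_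
    refine (iInf_le _ (inclusionInDoubleDual ℝ X x)).trans ?_
    exact add_le_add (fbiconj_incl_le f hfb x) (fbiconj_incl_le g hgb x)
  · refine le_iInf fun z => ?_
    rw [← hsup]
    exact iSup_le fun p => dual_le_biconj f g hfp hgp z p
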